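/- The mixed capacity C̃_{BV^{p(·)}} is an outer measure on subsets of Ω: C̃_{BV^{p(·)}}(∅) = 0; if E₁ ⊂ E₂ ⊂ Ω then C̃_{BV^{p(·)}}(E₁) ≤ C̃_{BV^{p(·)}}(E₂); and for any countable family E₁, E₂, … ⊂ Ω one has C̃_{BV^{p(·)}}(⋃_{i=1}^∞ E_i) ≤ Σ_{i=1}^∞ C̃_{BV^{p(·)}}(E_i). -/

import Mathlib

open MeasureTheory Filter Topology ENNReal Set

noncomputable section

/-- Euclidean space `ℝⁿ`. -/
abbrev Eu (n : ℕ) : Type := EuclideanSpace ℝ (Fin n)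

/-- The modular `ρ_{p(·)}(u) = ∫_Ω |u|^{p(x)} dx`. -/
def vModular {n : ℕ} (p : Eu n → ℝ) (Ω : Set (Eu n)) (u : Eu n → ℝ) : ℝ≥0∞ :=
  ∫⁻ x in Ω, ENNReal.ofReal (|u x| ^ p x)

/-- The gradient modular `∫_Ω |∇u|^{p(x)} dx` (for a.e. differentiable `u`,
`fderiv` is the gradient). -/
def gradModular {n : ℕ} (p : Eu n → ℝ) (Ω : Set (Eu n)) (u : Eu n → ℝ) : ℝ≥0∞ :=
  ∫⁻ x in Ω, ENNReal.ofReal (‖fderiv ℝ u x‖ ^ p x)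

/-- Membership in the variable exponent Lebesgue space `L^{p(·)}(Ω)`. -/
def MemLpVar {n : ℕ} (p : Eu n → ℝ) (Ω : Set (Eu n)) (u : Eu n → ℝ) : Prop :=
  Measurable u ∧ ∃ l : ℝ, 0 < l ∧ vModular p Ω (fun x => u x / l) < ⊤

/-- The Luxemburg norm on `L^{p(·)}(Ω)`. -/
def luxNorm {n : ℕ} (p : Eu n → ℝ) (Ω : Set (Eu n)) (u : Eu n → ℝ) : ℝ :=
  sInf {l : ℝ | 0 < l ∧ vModular p Ω (fun x => u x / l) ≤ 1}

/-- Convergence `v i → u` in `L^{p(·)}(Ω)` (Luxemburg norm convergence). -/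
def LpTendsto {n : ℕ} (p : Eu n → ℝ) (Ω : Set (Eu n)) (v : ℕ → Eu n → ℝ)
    (u : Eu n → ℝ) : Prop :=
  Tendsto (fun i => luxNorm p Ω (fun x => v i x - u x)) atTop (𝓝 0)

/-- `u` is locally Lipschitz on `Ω`. -/
def LocLipOn {n : ℕ} (Ω : Set (Eu n)) (u : Eu n → ℝ) : Prop :=
  ∀ x ∈ Ω, ∃ K : NNReal, ∃ t ∈ 𝓝[Ω] x, LipschitzOnWith K u t

/-- The relaxed mixed pseudo-modular `ρ̃_{BV^{p(·)}(Ω)}(u)`: the infimum of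
`liminf_i ∫_Ω |∇u_i|^{p(x)} dx` over all sequences of locally Lipschitz functions
in `L^{p(·)}(Ω)` converging to `u` in `L^{p(·)}(Ω)`. -/
def bvModular {n : ℕ} (p : Eu n → ℝ) (Ω : Set (Eu n)) (u : Eu n → ℝ) : ℝ≥0∞ :=
  ⨅ (v : ℕ → Eu n → ℝ)
    (_ : (∀ i, LocLipOn Ω (v i) ∧ MemLpVar p Ω (v i)) ∧ LpTendsto p Ω v u),
    Filter.liminf (fun i => gradModular p Ω (v i)) atTop

/-- Membership in the mixed space `B̃V^{p(·)}(Ω)`. -/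
def MemBVt {n : ℕ} (p : Eu n → ℝ) (Ω : Set (Eu n)) (u : Eu n → ℝ) : Prop :=
  MemLpVar p Ω u ∧ bvModular p Ω u < ⊤

/-- The norm `‖u‖_{B̃V^{p(·)}}`. -/
def bvNorm {n : ℕ} (p : Eu n → ℝ) (Ω : Set (Eu n)) (u : Eu n → ℝ) : ℝ :=
  luxNorm p Ω u + sInf {l : ℝ | 0 < l ∧ bvModular p Ω (fun x => u x / l) ≤ 1}

/-- The admissible class `Ã(E)` for the mixed capacity. -/
def admissibleBV {n : ℕ} (p : Eu n → ℝ) (Ω E : Set (Eu n)) : Set (Eu n → ℝ) :=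
  {u | MemBVt p Ω u ∧ (∀ x ∈ Ω, 0 ≤ u x ∧ u x ≤ 1) ∧
       ∃ U : Set (Eu n), IsOpen U ∧ E ⊆ U ∧ ∀ x ∈ U ∩ Ω, u x = 1}

/-- The mixed BV-Sobolev capacity `C̃_{BV^{p(·)}}(E)` (with `inf ∅ = ∞`). -/
def bvCapacity {n : ℕ} (p : Eu n → ℝ) (Ω E : Set (Eu n)) : ℝ≥0∞ :=
  ⨅ (u : Eu n → ℝ) (_ : u ∈ admissibleBV p Ω E), vModular p Ω u + bvModular p Ω u

/-- Divergence of a vector field. -/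
def divg {n : ℕ} (φ : Eu n → Eu n) (x : Eu n) : ℝ :=
  ∑ i, fderiv ℝ φ x (EuclideanSpace.single i 1) i

/-- Total variation `‖Du‖(U)` on an open set `U`, via the defining supremum over
`C¹` vector fields compactly supported in `U` with `|φ| ≤ 1`. -/
def totVarOpen {n : ℕ} (U : Set (Eu n)) (u : Eu n → ℝ) : ℝ≥0∞ :=
  ⨆ (φ : Eu n → Eu n)
    (_ : ContDiff ℝ 1 φ ∧ HasCompactSupport φ ∧ tsupport φ ⊆ U ∧ ∀ x, ‖φ x‖ ≤ 1),
    ENNReal.ofReal (∫ x in U, u x * divg φ x)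

/-- Total variation `‖Du‖(A)` of a set `A ⊆ Ω`, extended from open sets. -/
def totVarIn {n : ℕ} (Ω A : Set (Eu n)) (u : Eu n → ℝ) : ℝ≥0∞ :=
  ⨅ (U : Set (Eu n)) (_ : IsOpen U ∧ A ⊆ U ∧ U ⊆ Ω), totVarOpen U u

/-- `g` is the weak (distributional) gradient of `u` on `Ω`. -/
def IsWeakGrad {n : ℕ} (Ω : Set (Eu n)) (u : Eu n → ℝ) (g : Eu n → Eu n) : Prop :=
  ∀ φ : Eu n → ℝ, ContDiff ℝ 1 φ → HasCompactSupport φ → tsupport φ ⊆ Ω →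
    ∀ i : Fin n,
      (∫ x in Ω, u x * (fderiv ℝ φ x (EuclideanSpace.single i 1))) =
        - ∫ x in Ω, g x i * φ x

/-- The Harjulehto–Hästö–Latvala mixed pseudo-modular
`ρ_{BV^{p(·)}(F)}(u) = ‖Du‖(F ∩ Y) + ∫_{F∖Y} |∇u|^{p(x)} dx`, where `Y = {p = 1}`
and `g` is the weak gradient of `u` on the Sobolev part. -/
def hhlModular {n : ℕ} (p : Eu n → ℝ) (Ω F : Set (Eu n)) (u : Eu n → ℝ)
    (g : Eu n → Eu n) : ℝ≥0∞ :=
  totVarIn Ω (F ∩ {x | p x = 1}) u +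
    ∫⁻ x in F \ {x | p x = 1}, ENNReal.ofReal (‖g x‖ ^ p x)

/-- The HHL mixed pseudo-modular for (smooth) functions whose gradient is `fderiv`. -/
def hhlModularSmooth {n : ℕ} (p : Eu n → ℝ) (Ω F : Set (Eu n)) (v : Eu n → ℝ) : ℝ≥0∞ :=
  totVarIn Ω (F ∩ {x | p x = 1}) v +
    ∫⁻ x in F \ {x | p x = 1}, ENNReal.ofReal (‖fderiv ℝ v x‖ ^ p x)

/-- Membership in the HHL space `BV^{p(·)}(Ω)`: `u ∈ L^{p(·)}(Ω)` and
`inf{λ > 0 : ρ_{BV^{p(·)}(Ω)}(u/λ) ≤ 1} < ∞`. -/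
def MemBVp {n : ℕ} (p : Eu n → ℝ) (Ω : Set (Eu n)) (u : Eu n → ℝ) : Prop :=
  MemLpVar p Ω u ∧
    ∃ g : Eu n → Eu n, IsWeakGrad (Ω \ {x | p x = 1}) u g ∧
      ∃ l : ℝ, 0 < l ∧
        hhlModular p Ω Ω (fun x => u x / l) (fun x => l⁻¹ • g x) ≤ 1

/-- Mollification `u_δ = φ_δ ∗ u` (with `u` extended by zero outside `Ω`),
where `φ_δ(z) = δ^{-n} φ(z/δ)`. -/
def mollify {n : ℕ} (Ω : Set (Eu n)) (u : Eu n → ℝ) (φ : Eu n → ℝ) (δ : ℝ)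
    (x : Eu n) : ℝ :=
  ∫ y in Ω, (δ ^ n)⁻¹ * φ (δ⁻¹ • (x - y)) * u y

/-- `p` is (locally) log-Hölder continuous on `Ω` with constant `c`. -/
def LogHolderOn {n : ℕ} (c : ℝ) (Ω : Set (Eu n)) (p : Eu n → ℝ) : Prop :=
  ∀ x ∈ Ω, ∀ y ∈ Ω, |p x - p y| ≤ c / Real.log (Real.exp 1 + 1 / dist x y)

/-- `p` is globally log-Hölder continuous on `ℝⁿ` with constant `c`. -/
def LogHolderGlobal {n : ℕ} (c : ℝ) (p : Eu n → ℝ) : Prop :=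
  LogHolderOn c Set.univ p ∧
    ∃ pinf : ℝ, 1 ≤ pinf ∧ ∀ x, |p x - pinf| ≤ c / Real.log (Real.exp 1 + ‖x‖)

/-- The variable exponent Sobolev capacity `C_{p(·)}(E)`: infimum of
`∫ |u|^{p(x)} + |∇u|^{p(x)} dx` over `u ∈ W^{1,p(·)}(ℝⁿ)` with `u ≥ 1` on an
open set containing `E`. -/
def sobolevCapacity {n : ℕ} (p : Eu n → ℝ) (E : Set (Eu n)) : ℝ≥0∞ :=
  ⨅ (u : Eu n → ℝ) (g : Eu n → Eu n)
    (_ : MemLpVar p Set.univ u ∧ IsWeakGrad Set.univ u g ∧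
         MemLpVar p Set.univ (fun x => ‖g x‖) ∧
         ∃ U : Set (Eu n), IsOpen U ∧ E ⊆ U ∧ ∀ x ∈ U, 1 ≤ u x),
    vModular p Set.univ u + ∫⁻ x, ENNReal.ofReal (‖g x‖ ^ p x)

section Helpers

variable {n : ℕ} {p : Eu n → ℝ} {Ω : Set (Eu n)}

/-- clamp a real number to `[0,1]`. -/
def clampR (t : ℝ) : ℝ := max 0 (min t 1)

lemma clampR_nonneg (t : ℝ) : 0 ≤ clampR t := le_max_left _ _

lemma clampR_le_one (t : ℝ) : clampR t ≤ 1 := max_le zero_le_one (min_le_right _ _)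

lemma abs_clampR_le (t : ℝ) : |clampR t| ≤ |t| := by
  rw [abs_of_nonneg (clampR_nonneg t)]
  exact max_le (abs_nonneg t) ((min_le_left t 1).trans (le_abs_self t))

lemma continuous_clampR : Continuous clampR :=
  continuous_const.max (continuous_id.min continuous_const)

lemma lipschitzWith_clampR : LipschitzWith 1 clampR := by
  refine LipschitzWith.of_dist_le_mul fun a b => ?_
  rw [NNReal.coe_one, one_mul, Real.dist_eq, Real.dist_eq]
  calc |clampR a - clampR b| ≤ max |(0:ℝ) - 0| |min a 1 - min b 1| :=
        abs_max_sub_max_le_max _ _ _ _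
    _ = |min a 1 - min b 1| := by simp
    _ ≤ max |a - b| |(1:ℝ) - 1| := abs_min_sub_min_le_max _ _ _ _
    _ = |a - b| := by simp

lemma rpow_term_le {a b q : ℝ} (ha : 0 ≤ a) (hab : a ≤ b) (hq : 0 ≤ q) :
    ENNReal.ofReal (a ^ q) ≤ ENNReal.ofReal (b ^ q) :=
  ENNReal.ofReal_le_ofReal (Real.rpow_le_rpow ha hab hq)

lemma vmod_mono (hΩm : MeasurableSet Ω) (hp1 : ∀ x ∈ Ω, 1 ≤ p x) {f g : Eu n → ℝ}
    (h : ∀ x ∈ Ω, |f x| ≤ |g x|) : vModular p Ω f ≤ vModular p Ω g := by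
  refine lintegral_mono_ae ?_
  filter_upwards [ae_restrict_mem hΩm] with x hx
  exact rpow_term_le (abs_nonneg _) (h x hx) (zero_le_one.trans (hp1 x hx))

lemma vmod_eq_zero (hΩm : MeasurableSet Ω) (hp1 : ∀ x ∈ Ω, 1 ≤ p x) {f : Eu n → ℝ}
    (h : ∀ x ∈ Ω, f x = 0) : vModular p Ω f = 0 := by
  have hae : (fun x => ENNReal.ofReal (|f x| ^ p x)) =ᵐ[volume.restrict Ω]
      (fun _ => 0) := by
    filter_upwards [ae_restrict_mem hΩm] with x hx
    rw [h x hx, abs_zero, Real.zero_rpow ((lt_of_lt_of_le one_pos (hp1 x hx)).ne'),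
      ENNReal.ofReal_zero]
  rw [vModular, lintegral_congr_ae hae, lintegral_zero]

lemma vmod_anti (hΩm : MeasurableSet Ω) (hp1 : ∀ x ∈ Ω, 1 ≤ p x) {f : Eu n → ℝ}
    {l m : ℝ} (h0 : 0 < l) (hlm : l ≤ m) :
    vModular p Ω (fun x => f x / m) ≤ vModular p Ω (fun x => f x / l) := by
  refine vmod_mono hΩm hp1 fun x _ => ?_
  have hm : 0 < m := h0.trans_le hlm
  rw [abs_div, abs_div, abs_of_pos hm, abs_of_pos h0]
  gcongr

lemma vmod_scale (hΩm : MeasurableSet Ω) (hp1 : ∀ x ∈ Ω, 1 ≤ p x) {f : Eu n → ℝ}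
    {l m : ℝ} (h0 : 0 < l) (hlm : l ≤ m) :
    vModular p Ω (fun x => f x / m) ≤
      ENNReal.ofReal (l / m) * vModular p Ω (fun x => f x / l) := by
  have hm : 0 < m := h0.trans_le hlm
  rw [vModular, vModular, ← lintegral_const_mul' _ _ ENNReal.ofReal_ne_top]
  refine lintegral_mono_ae ?_
  filter_upwards [ae_restrict_mem hΩm] with x hx
  have hq : 1 ≤ p x := hp1 x hx
  have h1 : |f x / m| = l / m * |f x / l| := by
    rw [abs_div, abs_div, abs_of_pos hm, abs_of_pos h0]
    field_simp
  rw [h1, Real.mul_rpow (by positivity) (abs_nonneg _), ← ENNReal.ofReal_mul (by positivity)]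
  refine ENNReal.ofReal_le_ofReal
    (mul_le_mul_of_nonneg_right ?_ (Real.rpow_nonneg (abs_nonneg _) _))
  calc (l/m) ^ p x ≤ (l/m) ^ (1:ℝ) :=
        Real.rpow_le_rpow_of_exponent_ge (by positivity) (div_le_one_of_le₀ hlm hm.le) hq
    _ = l/m := Real.rpow_one _

lemma vmod_sumbound (hΩm : MeasurableSet Ω) (hp1 : ∀ x ∈ Ω, 1 ≤ p x)
    (hpm : Measurable p) {f g₁ g₂ : Eu n → ℝ} {ε : ℝ}
    (hg₁ : Measurable g₁) (hε : 0 < ε) (h : ∀ x, |f x| ≤ |g₁ x| + |g₂ x|) :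
    vModular p Ω (fun x => f x / ε) ≤
      vModular p Ω (fun x => g₁ x / (ε/2)) + vModular p Ω (fun x => g₂ x / (ε/2)) := by
  have hε2 : 0 < ε/2 := half_pos hε
  have hmeas : Measurable fun x => ENNReal.ofReal (|g₁ x / (ε/2)| ^ p x) :=
    ((hg₁.div_const _).abs.pow hpm).ennreal_ofReal
  rw [vModular, vModular, vModular, ← lintegral_add_left hmeas]
  refine lintegral_mono_ae ?_
  filter_upwards [ae_restrict_mem hΩm] with x hx
  have hq0 : (0:ℝ) ≤ p x := zero_le_one.trans (hp1 x hx)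
  try simp only [Pi.add_apply]
  rcases le_total (|g₁ x|) (|g₂ x|) with hc | hc
  · have hb : |f x / ε| ≤ |g₂ x / (ε/2)| := by
      rw [abs_div, abs_div, abs_of_pos hε, abs_of_pos hε2, div_le_div_iff₀ hε hε2]
      nlinarith [h x, abs_nonneg (f x), abs_nonneg (g₂ x), hε.le]
    exact (rpow_term_le (abs_nonneg _) hb hq0).trans le_add_self
  · have hb : |f x / ε| ≤ |g₁ x / (ε/2)| := by
      rw [abs_div, abs_div, abs_of_pos hε, abs_of_pos hε2, div_le_div_iff₀ hε hε2]
      nlinarith [h x, abs_nonneg (f x), abs_nonneg (g₁ x), hε.le]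
    exact (rpow_term_le (abs_nonneg _) hb hq0).trans le_self_add

lemma luxNorm_nonneg {f : Eu n → ℝ} : 0 ≤ luxNorm p Ω f :=
  Real.sInf_nonneg fun l hl => hl.1.le

lemma luxNorm_le {f : Eu n → ℝ} {c : ℝ} (hc : 0 < c)
    (h : vModular p Ω (fun x => f x / c) ≤ 1) : luxNorm p Ω f ≤ c :=
  csInf_le ⟨0, fun l hl => hl.1.le⟩ ⟨hc, h⟩

lemma memlp_nonempty (hΩm : MeasurableSet Ω) (hp1 : ∀ x ∈ Ω, 1 ≤ p x) {f : Eu n → ℝ}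
    (hf : MemLpVar p Ω f) :
    ∃ l : ℝ, 0 < l ∧ vModular p Ω (fun x => f x / l) ≤ 1 := by
  obtain ⟨-, l₀, hl₀, hA⟩ := hf
  set T : ℝ := (vModular p Ω (fun x => f x / l₀)).toReal with hTdef
  have hT0 : 0 ≤ T := ENNReal.toReal_nonneg
  have hAeq : vModular p Ω (fun x => f x / l₀) = ENNReal.ofReal T :=
    (ENNReal.ofReal_toReal hA.ne).symm
  refine ⟨l₀ * (T + 1), by positivity, ?_⟩
  have h1 : l₀ ≤ l₀ * (T + 1) := le_mul_of_one_le_right hl₀.le (by linarith)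
  calc vModular p Ω (fun x => f x / (l₀ * (T + 1)))
      ≤ ENNReal.ofReal (l₀ / (l₀ * (T + 1))) * vModular p Ω (fun x => f x / l₀) :=
        vmod_scale hΩm hp1 hl₀ h1
    _ = ENNReal.ofReal (l₀ / (l₀ * (T + 1)) * T) := by
        rw [hAeq, ← ENNReal.ofReal_mul (by positivity)]
    _ ≤ 1 := by
        rw [← ENNReal.ofReal_one]
        refine ENNReal.ofReal_le_ofReal ?_
        have he : l₀ / (l₀ * (T + 1)) = 1 / (T + 1) := by
          field_simp
        rw [he, div_mul_eq_mul_div, one_mul, div_le_one (by linarith)]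
        linarith

/-- modular smallness along a sequence, at every scale. -/
def ModTend (p : Eu n → ℝ) (Ω : Set (Eu n)) (h : ℕ → Eu n → ℝ) : Prop :=
  ∀ lam : ℝ, 0 < lam → ∀ θ : ℝ, 0 < θ →
    ∀ᶠ j in atTop, vModular p Ω (fun x => h j x / lam) ≤ ENNReal.ofReal θ

lemma modtend_of_lux (hΩm : MeasurableSet Ω) (hp1 : ∀ x ∈ Ω, 1 ≤ p x)
    {h : ℕ → Eu n → ℝ}
    (hne : ∀ j, ∃ l, 0 < l ∧ vModular p Ω (fun x => h j x / l) ≤ 1)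
    (hlux : Tendsto (fun j => luxNorm p Ω (h j)) atTop (𝓝 0)) : ModTend p Ω h := by
  intro lam hlam θ hθ
  have hδ : (0:ℝ) < min (lam/2) (θ*lam) := lt_min (by positivity) (by positivity)
  filter_upwards [hlux.eventually (gt_mem_nhds hδ)] with j hj
  obtain ⟨l₀, hl₀⟩ := hne j
  simp only [luxNorm] at hj
  obtain ⟨l, ⟨hl0, hl1⟩, hllt⟩ := exists_lt_of_csInf_lt ⟨l₀, hl₀⟩ hj
  have hllam : l ≤ lam := hllt.le.trans ((min_le_left _ _).trans (by linarith))
  calc vModular p Ω (fun x => h j x / lam)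
      ≤ ENNReal.ofReal (l / lam) * vModular p Ω (fun x => h j x / l) :=
        vmod_scale hΩm hp1 hl0 hllam
    _ ≤ ENNReal.ofReal (l / lam) * 1 := mul_le_mul_right hl1 _
    _ ≤ ENNReal.ofReal θ := by
        rw [mul_one]
        refine ENNReal.ofReal_le_ofReal ?_
        rw [div_le_iff₀ hlam]
        have := hllt.le.trans (min_le_right _ _)
        linarith

lemma modtend_of_tendsto {h : ℕ → Eu n → ℝ}
    (ht : ∀ lam : ℝ, 0 < lam →
      Tendsto (fun j => vModular p Ω (fun x => h j x / lam)) atTop (𝓝 0)) :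
    ModTend p Ω h := by
  intro lam hlam θ hθ
  filter_upwards [(ht lam hlam).eventually_lt_const (ENNReal.ofReal_pos.2 hθ)] with j hj
  exact hj.le

lemma modtend_zero (hΩm : MeasurableSet Ω) (hp1 : ∀ x ∈ Ω, 1 ≤ p x) :
    ModTend p Ω (fun _ _ => (0:ℝ)) := by
  intro lam hlam θ hθ
  refine Filter.Eventually.of_forall fun j => ?_
  rw [vmod_eq_zero hΩm hp1 (fun x _ => zero_div lam)]
  exact zero_le

lemma lux_tendsto_of_sum (hΩm : MeasurableSet Ω) (hp1 : ∀ x ∈ Ω, 1 ≤ p x)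
    (hpm : Measurable p) {F : ℕ → Eu n → ℝ} {G : Eu n → ℝ} {h₁ h₂ : ℕ → Eu n → ℝ}
    (hm1 : ∀ j, Measurable (h₁ j))
    (hpt : ∀ j x, |F j x - G x| ≤ |h₁ j x| + |h₂ j x|)
    (ht1 : ModTend p Ω h₁) (ht2 : ModTend p Ω h₂) :
    Tendsto (fun j => luxNorm p Ω (fun x => F j x - G x)) atTop (𝓝 0) := by
  rw [Metric.tendsto_atTop]
  intro ε hε
  have h1 := ht1 (ε/4) (by positivity) (1/2) (by norm_num)
  have h2 := ht2 (ε/4) (by positivity) (1/2) (by norm_num)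
  obtain ⟨N, hN⟩ := eventually_atTop.1 (h1.and h2)
  refine ⟨N, fun j hj => ?_⟩
  have hsum := vmod_sumbound (ε := ε/2) hΩm hp1 hpm (hm1 j) (by positivity) (hpt j)
  have he : (ε/2)/2 = ε/4 := by ring
  rw [he] at hsum
  have hb : vModular p Ω (fun x => (F j x - G x) / (ε/2)) ≤ 1 := by
    refine hsum.trans (le_trans (add_le_add (hN j hj).1 (hN j hj).2) ?_)
    rw [← ENNReal.ofReal_add (by norm_num) (by norm_num)]
    rw [show (1:ℝ)/2 + 1/2 = 1 by norm_num, ENNReal.ofReal_one]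
  have hle : luxNorm p Ω (fun x => F j x - G x) ≤ ε/2 := luxNorm_le (by positivity) hb
  rw [Real.dist_eq, sub_zero, abs_of_nonneg luxNorm_nonneg]
  linarith

lemma memlp_of_le (hΩm : MeasurableSet Ω) (hp1 : ∀ x ∈ Ω, 1 ≤ p x)
    (hpm : Measurable p) {f g₁ g₂ : Eu n → ℝ} (hf : Measurable f)
    (h : ∀ x, |f x| ≤ |g₁ x| + |g₂ x|) (h₁ : MemLpVar p Ω g₁) (h₂ : MemLpVar p Ω g₂) :
    MemLpVar p Ω f := by
  obtain ⟨hm1, l₁, hl₁, hA₁⟩ := h₁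
  obtain ⟨hm2, l₂, hl₂, hA₂⟩ := h₂
  refine ⟨hf, 2 * max l₁ l₂, by positivity, ?_⟩
  have hb := vmod_sumbound (ε := 2 * max l₁ l₂) hΩm hp1 hpm hm1 (by positivity) h
  have he : 2 * max l₁ l₂ / 2 = max l₁ l₂ := by ring
  rw [he] at hb
  refine lt_of_le_of_lt hb (ENNReal.add_lt_top.2 ⟨?_, ?_⟩)
  · exact lt_of_le_of_lt (vmod_anti hΩm hp1 hl₁ (le_max_left _ _)) hA₁
  · exact lt_of_le_of_lt (vmod_anti hΩm hp1 hl₂ (le_max_right _ _)) hA₂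

lemma memlp_sub (hΩm : MeasurableSet Ω) (hp1 : ∀ x ∈ Ω, 1 ≤ p x)
    (hpm : Measurable p) {f g : Eu n → ℝ} (h₁ : MemLpVar p Ω f) (h₂ : MemLpVar p Ω g) :
    MemLpVar p Ω (fun x => f x - g x) :=
  memlp_of_le hΩm hp1 hpm (h₁.1.sub h₂.1) (fun x => abs_sub _ _) h₁ h₂

lemma memlp_max (hΩm : MeasurableSet Ω) (hp1 : ∀ x ∈ Ω, 1 ≤ p x)
    (hpm : Measurable p) {f g : Eu n → ℝ} (h₁ : MemLpVar p Ω f) (h₂ : MemLpVar p Ω g) :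
    MemLpVar p Ω (fun x => max (f x) (g x)) := by
  refine memlp_of_le hΩm hp1 hpm (h₁.1.max h₂.1) (fun x => ?_) h₁ h₂
  rcases le_total (f x) (g x) with h | h
  · rw [max_eq_right h]
    exact le_add_of_nonneg_left (abs_nonneg (f x))
  · rw [max_eq_left h]
    exact le_add_of_nonneg_right (abs_nonneg (g x))

lemma memlp_mono (hΩm : MeasurableSet Ω) (hp1 : ∀ x ∈ Ω, 1 ≤ p x) {f g : Eu n → ℝ}
    (hf : Measurable f) (h : ∀ x ∈ Ω, |f x| ≤ |g x|) (hg : MemLpVar p Ω g) :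
    MemLpVar p Ω f := by
  obtain ⟨hm, l, hl, hA⟩ := hg
  refine ⟨hf, l, hl, lt_of_le_of_lt (vmod_mono hΩm hp1 fun x hx => ?_) hA⟩
  rw [abs_div, abs_div]
  exact (div_le_div_iff_of_pos_right (abs_pos.2 hl.ne')).2 (h x hx)

lemma memlp_zero (hΩm : MeasurableSet Ω) (hp1 : ∀ x ∈ Ω, 1 ≤ p x) :
    MemLpVar p Ω (fun _ => (0:ℝ)) := by
  refine ⟨measurable_const, 1, one_pos, ?_⟩
  rw [vmod_eq_zero hΩm hp1 (fun x _ => zero_div 1)]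
  exact ENNReal.zero_lt_top

lemma loclip_const (c : ℝ) : LocLipOn Ω (fun _ => c) := fun _ _ =>
  ⟨0, univ, univ_mem, (LipschitzWith.const c).lipschitzOnWith⟩

lemma loclip_max {v w : Eu n → ℝ} (hv : LocLipOn Ω v) (hw : LocLipOn Ω w) :
    LocLipOn Ω (fun x => max (v x) (w x)) := by
  intro x hx
  obtain ⟨Kv, tv, htv, hlv⟩ := hv x hx
  obtain ⟨Kw, tw, htw, hlw⟩ := hw x hx
  refine ⟨Kv + Kw, tv ∩ tw, inter_mem htv htw, ?_⟩
  rw [lipschitzOnWith_iff_dist_le_mul] at hlv hlw ⊢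
  intro a ha b hb
  rw [Real.dist_eq]
  calc |max (v a) (w a) - max (v b) (w b)| ≤ max |v a - v b| |w a - w b| :=
        abs_max_sub_max_le_max _ _ _ _
    _ ≤ max ((Kv:ℝ) * dist a b) ((Kw:ℝ) * dist a b) := by
        refine max_le_max ?_ ?_
        · rw [← Real.dist_eq]; exact hlv a ha.1 b hb.1
        · rw [← Real.dist_eq]; exact hlw a ha.2 b hb.2
    _ ≤ ((Kv + Kw : NNReal) : ℝ) * dist a b := by
        have h1 : (0:ℝ) ≤ (Kv:ℝ) := Kv.coe_nonneg
        have h2 : (0:ℝ) ≤ (Kw:ℝ) := Kw.coe_nonneg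
        have h3 : (0:ℝ) ≤ dist a b := dist_nonneg
        push_cast
        refine max_le ?_ ?_ <;> nlinarith

lemma loclip_clamp {v : Eu n → ℝ} (hv : LocLipOn Ω v) :
    LocLipOn Ω (fun x => clampR (v x)) := by
  intro x hx
  obtain ⟨K, t, ht, hl⟩ := hv x hx
  exact ⟨1 * K, t, ht, lipschitzWith_clampR.comp_lipschitzOnWith hl⟩

lemma cont_of_loclip (hΩ : IsOpen Ω) {v : Eu n → ℝ} (hv : LocLipOn Ω v) {x : Eu n}
    (hx : x ∈ Ω) : ContinuousAt v x := by
  obtain ⟨K, t, ht, hl⟩ := hv x hx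
  rw [nhdsWithin_eq_nhds.2 (hΩ.mem_nhds hx)] at ht
  exact (hl.continuousOn.continuousWithinAt (mem_of_mem_nhds ht)).continuousAt ht

lemma aediff (hΩ : IsOpen Ω) {v : Eu n → ℝ} (hv : LocLipOn Ω v) :
    ∀ᵐ x ∂(volume.restrict Ω), DifferentiableAt ℝ v x := by
  have key : ∀ x : Eu n, ∃ O : Set (Eu n),
      x ∈ Ω → (IsOpen O ∧ x ∈ O ∧ ∃ K, LipschitzOnWith K v O) := by
    intro x
    by_cases hx : x ∈ Ω
    · obtain ⟨K, t, ht, hl⟩ := hv x hx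
      obtain ⟨U, hUo, hxU, hUt⟩ := mem_nhdsWithin.1 ht
      exact ⟨U ∩ Ω, fun _ => ⟨hUo.inter hΩ, ⟨hxU, hx⟩, K, hl.mono hUt⟩⟩
    · exact ⟨∅, fun h => absurd h hx⟩
  choose O hO using key
  obtain ⟨s, hsΩ, hsc, hcov⟩ := TopologicalSpace.countable_cover_nhdsWithin
    (f := O) (s := Ω)
    (fun x hx => mem_nhdsWithin_of_mem_nhds (((hO x hx).1).mem_nhds (hO x hx).2.1))
  have hae : ∀ x ∈ s, ∀ᵐ y ∂(volume : Measure (Eu n)),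
      y ∈ O x → DifferentiableAt ℝ v y := by
    intro x hxs
    obtain ⟨ho, hxo, K, hK⟩ := hO x (hsΩ hxs)
    filter_upwards [hK.ae_differentiableWithinAt_of_mem] with y hy hyO
    exact (hy hyO).differentiableAt (ho.mem_nhds hyO)
  have h2 : ∀ᵐ y ∂(volume : Measure (Eu n)), ∀ x ∈ s, y ∈ O x → DifferentiableAt ℝ v y :=
    (ae_ball_iff hsc).2 hae
  rw [ae_restrict_iff' hΩ.measurableSet]
  filter_upwards [h2] with y hy hyΩ
  obtain ⟨x, hxs, hyO⟩ := mem_iUnion₂.1 (hcov hyΩ)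
  exact hy x hxs hyO

lemma gradmod_max (hΩ : IsOpen Ω) (hp1 : ∀ x ∈ Ω, 1 ≤ p x) (hpm : Measurable p)
    {v w : Eu n → ℝ} (hv : LocLipOn Ω v) (hw : LocLipOn Ω w) :
    gradModular p Ω (fun x => max (v x) (w x)) ≤
      gradModular p Ω v + gradModular p Ω w := by
  have hmeas : Measurable fun x => ENNReal.ofReal (‖fderiv ℝ v x‖ ^ p x) :=
    ((measurable_fderiv ℝ v).norm.pow hpm).ennreal_ofReal
  rw [gradModular, gradModular, gradModular, ← lintegral_add_left hmeas]
  refine lintegral_mono_ae ?_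
  filter_upwards [ae_restrict_mem hΩ.measurableSet, aediff hΩ hv] with x hx hdv
  have hq0 : (0:ℝ) ≤ p x := zero_le_one.trans (hp1 x hx)
  have key : ‖fderiv ℝ (fun y => max (v y) (w y)) x‖ ≤
      max ‖fderiv ℝ v x‖ ‖fderiv ℝ w x‖ := by
    by_cases hdm : DifferentiableAt ℝ (fun y => max (v y) (w y)) x
    · rcases lt_trichotomy (v x) (w x) with h | h | h
      · have hev : (fun y => max (v y) (w y)) =ᶠ[𝓝 x] w := by
          filter_upwards [(cont_of_loclip hΩ hv hx).eventually_lt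
            (cont_of_loclip hΩ hw hx) h] with y hy
          exact max_eq_right hy.le
        rw [hev.fderiv_eq]
        exact le_max_right _ _
      · have hdiff : DifferentiableAt ℝ (fun y => max (v y) (w y) - v y) x := hdm.sub hdv
        have hmin : IsLocalMin (fun y => max (v y) (w y) - v y) x := by
          refine Filter.Eventually.of_forall fun y => ?_
          show max (v x) (w x) - v x ≤ max (v y) (w y) - v y
          have h1 : max (v x) (w x) - v x = 0 := by rw [← h, max_self, sub_self]
          rw [h1]
          exact sub_nonneg.2 (le_max_left _ _)
        have h0 := hmin.fderiv_eq_zero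
        rw [fderiv_fun_sub hdm hdv, sub_eq_zero] at h0
        rw [h0]
        exact le_max_left _ _
      · have hev : (fun y => max (v y) (w y)) =ᶠ[𝓝 x] v := by
          filter_upwards [(cont_of_loclip hΩ hw hx).eventually_lt
            (cont_of_loclip hΩ hv hx) h] with y hy
          exact max_eq_left hy.le
        rw [hev.fderiv_eq]
        exact le_max_left _ _
    · rw [fderiv_zero_of_not_differentiableAt hdm]
      simp only [norm_zero]
      exact le_max_of_le_left (norm_nonneg _)
  try simp only [Pi.add_apply]
  rcases le_total ‖fderiv ℝ v x‖ ‖fderiv ℝ w x‖ with hc | hc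
  · exact (rpow_term_le (norm_nonneg _) (key.trans (max_le hc le_rfl)) hq0).trans le_add_self
  · exact (rpow_term_le (norm_nonneg _) (key.trans (max_le le_rfl hc)) hq0).trans le_self_add

lemma gradmod_clamp (hΩ : IsOpen Ω) (hp1 : ∀ x ∈ Ω, 1 ≤ p x) {v : Eu n → ℝ}
    (hv : LocLipOn Ω v) :
    gradModular p Ω (fun x => clampR (v x)) ≤ gradModular p Ω v := by
  refine lintegral_mono_ae ?_
  filter_upwards [ae_restrict_mem hΩ.measurableSet] with x hx
  have hq0 : (0:ℝ) ≤ p x := zero_le_one.trans (hp1 x hx)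
  refine rpow_term_le (norm_nonneg _) ?_ hq0
  by_cases hdc : DifferentiableAt ℝ (fun y => clampR (v y)) x
  · have hcont := cont_of_loclip hΩ hv hx
    rcases lt_trichotomy (v x) 0 with h | h | h
    · have hev : (fun y => clampR (v y)) =ᶠ[𝓝 x] fun _ => 0 := by
        filter_upwards [hcont.eventually_lt continuousAt_const h] with y hy
        simp [clampR, min_eq_left (hy.le.trans zero_le_one), max_eq_left hy.le]
      rw [hev.fderiv_eq, fderiv_fun_const]
      simp only [Pi.zero_apply, norm_zero]
      exact norm_nonneg _
    · have h0 : clampR (v x) = 0 := by simp [clampR, h]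
      have hmin : IsLocalMin (fun y => clampR (v y)) x := by
        refine Filter.Eventually.of_forall fun y => ?_
        show clampR (v x) ≤ clampR (v y)
        rw [h0]
        exact clampR_nonneg _
      rw [hmin.fderiv_eq_zero]
      simp only [norm_zero]
      exact norm_nonneg _
    · rcases lt_trichotomy (v x) 1 with h1 | h1 | h1
      · have hev : (fun y => clampR (v y)) =ᶠ[𝓝 x] v := by
          filter_upwards [continuousAt_const.eventually_lt hcont h,
            hcont.eventually_lt continuousAt_const h1] with y hy0 hy1
          simp [clampR, min_eq_left hy1.le, max_eq_right hy0.le]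
        rw [hev.fderiv_eq]
      · have h0 : clampR (v x) = 1 := by simp [clampR, h1]
        have hmax : IsLocalMax (fun y => clampR (v y)) x := by
          refine Filter.Eventually.of_forall fun y => ?_
          show clampR (v y) ≤ clampR (v x)
          rw [h0]
          exact clampR_le_one _
        rw [hmax.fderiv_eq_zero]
        simp only [norm_zero]
        exact norm_nonneg _
      · have hev : (fun y => clampR (v y)) =ᶠ[𝓝 x] fun _ => 1 := by
          filter_upwards [continuousAt_const.eventually_lt hcont h1] with y hy
          simp [clampR, min_eq_right hy.le]
        rw [hev.fderiv_eq, fderiv_fun_const]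
        simp only [Pi.zero_apply, norm_zero]
        exact norm_nonneg _
  · rw [fderiv_zero_of_not_differentiableAt hdc]
    simp only [norm_zero]
    exact norm_nonneg _

lemma gradmod_const (hΩm : MeasurableSet Ω) (hp1 : ∀ x ∈ Ω, 1 ≤ p x) (c : ℝ) :
    gradModular p Ω (fun _ => c) = 0 := by
  have hae : (fun x => ENNReal.ofReal (‖fderiv ℝ (fun _ : Eu n => c) x‖ ^ p x))
      =ᵐ[volume.restrict Ω] fun _ => 0 := by
    filter_upwards [ae_restrict_mem hΩm] with x hx
    rw [fderiv_fun_const]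
    simp only [Pi.zero_apply, norm_zero]
    rw [Real.zero_rpow ((lt_of_lt_of_le one_pos (hp1 x hx)).ne'), ENNReal.ofReal_zero]
  rw [gradModular, lintegral_congr_ae hae, lintegral_zero]

lemma luxnorm_zero (hΩm : MeasurableSet Ω) (hp1 : ∀ x ∈ Ω, 1 ≤ p x) :
    luxNorm p Ω (fun _ => (0:ℝ)) = 0 := by
  have hset : {l : ℝ | 0 < l ∧ vModular p Ω (fun x => (0:ℝ) / l) ≤ 1} = Ioi 0 := by
    ext l
    simp only [mem_setOf_eq, mem_Ioi, and_iff_left_iff_imp]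
    intro hl
    rw [vmod_eq_zero hΩm hp1 (fun x _ => zero_div l)]
    exact zero_le_one
  show sInf {l : ℝ | 0 < l ∧ vModular p Ω (fun x => (0:ℝ) / l) ≤ 1} = 0
  rw [hset, csInf_Ioi]

lemma bvmod_exists {f : Eu n → ℝ} {c : ℝ≥0∞} (hf : bvModular p Ω f < c) :
    ∃ v : ℕ → Eu n → ℝ,
      ((∀ i, LocLipOn Ω (v i) ∧ MemLpVar p Ω (v i)) ∧ LpTendsto p Ω v f) ∧
      Filter.liminf (fun i => gradModular p Ω (v i)) atTop < c := by
  unfold bvModular at hf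
  rw [iInf_lt_iff] at hf
  obtain ⟨v, hv⟩ := hf
  rw [iInf_lt_iff] at hv
  obtain ⟨h1, h2⟩ := hv
  exact ⟨v, h1, h2⟩

lemma bvmod_le {f : Eu n → ℝ} {v : ℕ → Eu n → ℝ}
    (h : (∀ i, LocLipOn Ω (v i) ∧ MemLpVar p Ω (v i)) ∧ LpTendsto p Ω v f) :
    bvModular p Ω f ≤ Filter.liminf (fun i => gradModular p Ω (v i)) atTop :=
  iInf₂_le v h

lemma bvmod_zero (hΩm : MeasurableSet Ω) (hp1 : ∀ x ∈ Ω, 1 ≤ p x) :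
    bvModular p Ω (fun _ => (0:ℝ)) = 0 := by
  refine le_antisymm ?_ zero_le
  have hmem : (∀ i : ℕ, LocLipOn Ω ((fun _ _ => (0:ℝ)) i) ∧
      MemLpVar p Ω ((fun _ _ => (0:ℝ)) i)) ∧
      LpTendsto p Ω (fun _ _ => (0:ℝ)) (fun _ => (0:ℝ)) := by
    refine ⟨fun i => ⟨loclip_const 0, memlp_zero hΩm hp1⟩, ?_⟩
    show Tendsto (fun _ : ℕ => luxNorm p Ω fun x => (0:ℝ) - 0) atTop (𝓝 0)
    have h0 : (fun _ : Eu n => (0:ℝ) - 0) = fun _ => (0:ℝ) := funext fun _ => sub_self 0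
    rw [h0, luxnorm_zero hΩm hp1]
    exact tendsto_const_nhds
  refine le_trans (bvmod_le hmem) ?_
  simp only [gradmod_const hΩm hp1]
  rw [Filter.liminf_const]

lemma bvmod_clamp (hΩ : IsOpen Ω) (hp1 : ∀ x ∈ Ω, 1 ≤ p x) (hpm : Measurable p)
    {f : Eu n → ℝ} (hf : MemLpVar p Ω f) :
    bvModular p Ω (fun x => clampR (f x)) ≤ bvModular p Ω f := by
  have hΩm := hΩ.measurableSet
  refine ENNReal.le_of_forall_pos_le_add fun ε hε hlt => ?_
  have hne : ((ε:ℝ≥0∞)) ≠ 0 := by exact_mod_cast hε.ne'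
  obtain ⟨v, ⟨hvc, hvt⟩, hlim⟩ := bvmod_exists (ENNReal.lt_add_right hlt.ne hne)
  refine le_trans (bvmod_le (v := fun j x => clampR (v j x)) ⟨fun j => ⟨?_, ?_⟩, ?_⟩) ?_
  · exact loclip_clamp (hvc j).1
  · exact memlp_mono hΩm hp1 (continuous_clampR.measurable.comp (hvc j).2.1)
      (fun x _ => abs_clampR_le _) (hvc j).2
  · refine lux_tendsto_of_sum hΩm hp1 hpm (h₁ := fun j x => v j x - f x)
      (h₂ := fun _ _ => (0:ℝ)) (fun j => (hvc j).2.1.sub hf.1) (fun j x => ?_) ?_ ?_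
    · have hd := lipschitzWith_clampR.dist_le_mul (v j x) (f x)
      rw [NNReal.coe_one, one_mul, Real.dist_eq, Real.dist_eq] at hd
      simpa using hd
    · exact modtend_of_lux hΩm hp1
        (fun j => memlp_nonempty hΩm hp1 (memlp_sub hΩm hp1 hpm (hvc j).2 hf)) hvt
    · exact modtend_zero hΩm hp1
  · refine le_trans (Filter.liminf_le_liminf (Filter.Eventually.of_forall fun j =>
      gradmod_clamp hΩ hp1 (hvc j).1)) hlim.le

lemma bvmod_max (hΩ : IsOpen Ω) (hp1 : ∀ x ∈ Ω, 1 ≤ p x) (hpm : Measurable p)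
    {f g : Eu n → ℝ} (hf : MemLpVar p Ω f) (hg : MemLpVar p Ω g) :
    bvModular p Ω (fun x => max (f x) (g x)) ≤ bvModular p Ω f + bvModular p Ω g := by
  have hΩm := hΩ.measurableSet
  refine ENNReal.le_of_forall_pos_le_add fun ε hε hlt => ?_
  have hftop : bvModular p Ω f ≠ ⊤ := fun h => by simp [h] at hlt
  have hgtop : bvModular p Ω g ≠ ⊤ := fun h => by simp [h] at hlt
  have hε2 : ((ε:ℝ≥0∞) / 2) ≠ 0 := by
    rw [ne_eq, ENNReal.div_eq_zero_iff]
    push_neg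
    exact ⟨by exact_mod_cast hε.ne', ENNReal.ofNat_ne_top⟩
  obtain ⟨v, ⟨hvc, hvt⟩, hlimv⟩ := bvmod_exists (ENNReal.lt_add_right hftop hε2)
  obtain ⟨w, ⟨hwc, hwt⟩, hlimw⟩ := bvmod_exists (ENNReal.lt_add_right hgtop hε2)
  obtain ⟨φ, hφm, hφ⟩ := extraction_of_frequently_atTop (frequently_lt_of_liminf_lt (by isBoundedDefault) hlimv)
  obtain ⟨ψ, hψm, hψ⟩ := extraction_of_frequently_atTop (frequently_lt_of_liminf_lt (by isBoundedDefault) hlimw)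
  have hcond : (∀ j, LocLipOn Ω (fun x => max (v (φ j) x) (w (ψ j) x)) ∧
      MemLpVar p Ω (fun x => max (v (φ j) x) (w (ψ j) x))) ∧
      LpTendsto p Ω (fun j x => max (v (φ j) x) (w (ψ j) x))
        (fun x => max (f x) (g x)) := by
    refine ⟨fun j => ⟨loclip_max (hvc (φ j)).1 (hwc (ψ j)).1,
      memlp_max hΩm hp1 hpm (hvc (φ j)).2 (hwc (ψ j)).2⟩, ?_⟩
    refine lux_tendsto_of_sum hΩm hp1 hpm (h₁ := fun j x => v (φ j) x - f x)
      (h₂ := fun j x => w (ψ j) x - g x)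
      (fun j => (hvc (φ j)).2.1.sub hf.1) (fun j x => ?_) ?_ ?_
    · refine (abs_max_sub_max_le_max _ _ _ _).trans (max_le ?_ ?_)
      · exact le_add_of_nonneg_right (abs_nonneg _)
      · exact le_add_of_nonneg_left (abs_nonneg _)
    · exact modtend_of_lux hΩm hp1
        (fun j => memlp_nonempty hΩm hp1 (memlp_sub hΩm hp1 hpm (hvc (φ j)).2 hf))
        (hvt.comp hφm.tendsto_atTop)
    · exact modtend_of_lux hΩm hp1
        (fun j => memlp_nonempty hΩm hp1 (memlp_sub hΩm hp1 hpm (hwc (ψ j)).2 hg))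
        (hwt.comp hψm.tendsto_atTop)
  refine le_trans (bvmod_le hcond) ?_
  have hb : ∀ j, gradModular p Ω (fun x => max (v (φ j) x) (w (ψ j) x)) ≤
      (bvModular p Ω f + (ε:ℝ≥0∞)/2) + (bvModular p Ω g + (ε:ℝ≥0∞)/2) := fun j =>
    (gradmod_max hΩ hp1 hpm (hvc (φ j)).1 (hwc (ψ j)).1).trans
      (add_le_add (hφ j).le (hψ j).le)
  refine le_trans (Filter.liminf_le_liminf (Filter.Eventually.of_forall hb)) ?_
  rw [Filter.liminf_const, add_add_add_comm, ENNReal.add_halves]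

/-- partial maxima of a sequence of functions. -/
def partialMax {n : ℕ} (t : ℕ → Eu n → ℝ) : ℕ → Eu n → ℝ
  | 0 => t 0
  | k + 1 => fun x => max (partialMax t k x) (t (k + 1) x)

end Helpers

/-- the mixed capacity is an outer measure: it vanishes on `∅`,
is monotone, and is countably subadditive. -/
theorem bvCapacity_outerMeasure
    {n : ℕ} (p : Eu n → ℝ) (Ω : Set (Eu n)) (hΩ : IsOpen Ω)
    (hpm : Measurable p) (hp1 : ∀ x ∈ Ω, 1 ≤ p x) (hpb : ∃ M : ℝ, ∀ x ∈ Ω, p x ≤ M) :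
    bvCapacity p Ω (∅ : Set (Eu n)) = 0 ∧
    (∀ E₁ E₂ : Set (Eu n), E₁ ⊆ E₂ → E₂ ⊆ Ω →
      bvCapacity p Ω E₁ ≤ bvCapacity p Ω E₂) ∧
    (∀ E : ℕ → Set (Eu n), (∀ i, E i ⊆ Ω) →
      bvCapacity p Ω (⋃ i, E i) ≤ ∑' i, bvCapacity p Ω (E i)) := by
  obtain ⟨M, hM⟩ := hpb
  have hΩm := hΩ.measurableSet
  refine ⟨?_, ?_, ?_⟩
  · -- capacity of the empty set is zero
    refine le_antisymm ?_ zero_le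
    have hbz : bvModular p Ω (fun _ : Eu n => (0:ℝ)) = 0 := bvmod_zero hΩm hp1
    have hadm : (fun _ : Eu n => (0:ℝ)) ∈ admissibleBV p Ω ∅ := by
      refine ⟨⟨memlp_zero hΩm hp1, ?_⟩, fun x _ => ⟨le_rfl, zero_le_one⟩,
        ∅, isOpen_empty, Subset.rfl, fun x hx => absurd hx.1 (notMem_empty x)⟩
      rw [hbz]
      exact ENNReal.zero_lt_top
    refine le_trans (iInf₂_le _ hadm) ?_
    rw [vmod_eq_zero hΩm hp1 (fun _ _ => rfl), hbz, add_zero]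
  · -- monotonicity
    intro E₁ E₂ h12 _
    refine le_iInf₂ fun u hu => iInf₂_le u ?_
    obtain ⟨h1, h2, U, hUo, hEU, h1U⟩ := hu
    exact ⟨h1, h2, U, hUo, h12.trans hEU, h1U⟩
  · -- countable subadditivity
    intro E _
    refine ENNReal.le_of_forall_pos_le_add fun ε hε hS => ?_
    have hcapfin : ∀ i, bvCapacity p Ω (E i) ≠ ⊤ :=
      fun i => ne_top_of_le_ne_top hS.ne (ENNReal.le_tsum i)
    have hε2 : ((ε:ℝ≥0∞)/2) ≠ 0 := by
      rw [ne_eq, ENNReal.div_eq_zero_iff]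
      push_neg
      exact ⟨by exact_mod_cast hε.ne', ENNReal.ofNat_ne_top⟩
    obtain ⟨δ, hδpos, hδsum⟩ := ENNReal.exists_pos_sum_of_countable hε2 ℕ
    have hchoice : ∀ i, ∃ u, u ∈ admissibleBV p Ω (E i) ∧
        vModular p Ω u + bvModular p Ω u ≤ bvCapacity p Ω (E i) + δ i := by
      intro i
      have hlt : bvCapacity p Ω (E i) < bvCapacity p Ω (E i) + δ i :=
        ENNReal.lt_add_right (hcapfin i) (by exact_mod_cast (hδpos i).ne')
      have hlt2 : (⨅ (u : Eu n → ℝ) (_ : u ∈ admissibleBV p Ω (E i)),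
          vModular p Ω u + bvModular p Ω u) < bvCapacity p Ω (E i) + δ i := hlt
      rw [iInf_lt_iff] at hlt2
      obtain ⟨u, hu⟩ := hlt2
      rw [iInf_lt_iff] at hu
      obtain ⟨hmem, hu⟩ := hu
      exact ⟨u, hmem, hu.le⟩
    choose uu hmem hle using hchoice
    have hulp : ∀ i, MemLpVar p Ω (uu i) := fun i => (hmem i).1.1
    choose UU hUopen hEUU hUone using fun i => (hmem i).2.2
    set t : ℕ → Eu n → ℝ := fun i x => clampR (uu i x) with htdef
    have htm : ∀ i, Measurable (t i) := fun i =>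
      continuous_clampR.measurable.comp (hulp i).1
    have ht0 : ∀ i x, 0 ≤ t i x := fun i x => clampR_nonneg _
    have ht1 : ∀ i x, t i x ≤ 1 := fun i x => clampR_le_one _
    have htlp : ∀ i, MemLpVar p Ω (t i) := fun i =>
      memlp_mono hΩm hp1 (htm i) (fun x _ => abs_clampR_le _) (hulp i)
    have htv : ∀ i, vModular p Ω (t i) ≤ vModular p Ω (uu i) := fun i =>
      vmod_mono hΩm hp1 (fun x _ => abs_clampR_le _)
    have htbv : ∀ i, bvModular p Ω (t i) ≤ bvModular p Ω (uu i) := fun i =>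
      bvmod_clamp hΩ hp1 hpm (hulp i)
    have hVB : (∑' i, vModular p Ω (t i)) + (∑' i, bvModular p Ω (t i)) ≤
        (∑' i, bvCapacity p Ω (E i)) + (ε:ℝ≥0∞)/2 := by
      rw [← ENNReal.tsum_add]
      refine le_trans (ENNReal.tsum_le_tsum fun i =>
        (add_le_add (htv i) (htbv i)).trans (hle i)) ?_
      rw [ENNReal.tsum_add]
      exact add_le_add_right hδsum.le _
    have hSfin : (∑' i, bvCapacity p Ω (E i)) + (ε:ℝ≥0∞)/2 ≠ ⊤ :=
      ENNReal.add_ne_top.2 ⟨hS.ne,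
        (ENNReal.div_lt_top ENNReal.coe_ne_top (by norm_num)).ne⟩
    have hVfin : (∑' i, vModular p Ω (t i)) ≠ ⊤ :=
      ne_top_of_le_ne_top hSfin (le_self_add.trans hVB)
    have hBfin : (∑' i, bvModular p Ω (t i)) ≠ ⊤ :=
      ne_top_of_le_ne_top hSfin (le_add_self.trans hVB)
    set T : Eu n → ℝ≥0∞ := fun x => ⨆ i, ENNReal.ofReal (t i x) with hTdef
    have hT1 : ∀ x, T x ≤ 1 := fun x => iSup_le fun i => by
      rw [← ENNReal.ofReal_one]
      exact ENNReal.ofReal_le_ofReal (ht1 i x)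
    have hTne : ∀ x, T x ≠ ⊤ := fun x => ((hT1 x).trans_lt ENNReal.one_lt_top).ne
    set u : Eu n → ℝ := fun x => (T x).toReal with hudef
    have hTm : Measurable T := Measurable.iSup fun i => (htm i).ennreal_ofReal
    have hum : Measurable u := ENNReal.measurable_toReal.comp hTm
    have hu0 : ∀ x, 0 ≤ u x := fun x => ENNReal.toReal_nonneg
    have hu1 : ∀ x, u x ≤ 1 := fun x => by
      simp only [hudef]
      calc (T x).toReal ≤ (1:ℝ≥0∞).toReal :=
            ENNReal.toReal_mono ENNReal.one_ne_top (hT1 x)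
        _ = 1 := ENNReal.toReal_one
    have hvmu : vModular p Ω u ≤ ∑' i, vModular p Ω (t i) := by
      have key : ∀ x ∈ Ω, ENNReal.ofReal (|u x| ^ p x) ≤
          ∑' i, ENNReal.ofReal (|t i x| ^ p x) := by
        intro x hx
        have hq : 1 ≤ p x := hp1 x hx
        have hq0 : (0:ℝ) < p x := lt_of_lt_of_le one_pos hq
        have e1 : ENNReal.ofReal (|u x| ^ p x) = T x ^ p x := by
          rw [abs_of_nonneg (hu0 x)]
          simp only [hudef]
          rw [← ENNReal.ofReal_rpow_of_nonneg ENNReal.toReal_nonneg hq0.le,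
            ENNReal.ofReal_toReal (hTne x)]
        have e2 : ∀ i, ENNReal.ofReal (|t i x| ^ p x) =
            ENNReal.ofReal (t i x) ^ p x := fun i => by
          rw [abs_of_nonneg (ht0 i x),
            ← ENNReal.ofReal_rpow_of_nonneg (ht0 i x) hq0.le]
        rw [e1]
        simp only [e2]
        have h5 : ∀ i, ENNReal.ofReal (t i x) ≤
            (∑' i, ENNReal.ofReal (t i x) ^ p x) ^ (1 / p x) := by
          intro i
          have hid : ENNReal.ofReal (t i x) =
              (ENNReal.ofReal (t i x) ^ p x) ^ (1 / p x) := by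
            rw [← ENNReal.rpow_mul, mul_one_div_cancel hq0.ne', ENNReal.rpow_one]
          rw [hid]
          exact ENNReal.rpow_le_rpow (ENNReal.le_tsum i) (by positivity)
        calc T x ^ p x ≤ ((∑' i, ENNReal.ofReal (t i x) ^ p x) ^ (1 / p x)) ^ p x :=
              ENNReal.rpow_le_rpow (iSup_le h5) hq0.le
          _ = ∑' i, ENNReal.ofReal (t i x) ^ p x := by
              rw [← ENNReal.rpow_mul, one_div_mul_cancel hq0.ne', ENNReal.rpow_one]
      calc vModular p Ω u ≤ ∫⁻ x in Ω, ∑' i, ENNReal.ofReal (|t i x| ^ p x) := by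
            refine lintegral_mono_ae ?_
            filter_upwards [ae_restrict_mem hΩm] with x hx using key x hx
        _ = ∑' i, vModular p Ω (t i) := lintegral_tsum fun i =>
            (((htm i).abs.pow hpm).ennreal_ofReal).aemeasurable
    have hulpvar : MemLpVar p Ω u := by
      refine ⟨hum, 1, one_pos, ?_⟩
      have hdiv : (fun x => u x / 1) = u := funext fun x => div_one _
      rw [hdiv]
      exact lt_of_le_of_lt hvmu hVfin.lt_top
    set w : ℕ → Eu n → ℝ := partialMax t with hwdef
    have hwsucc : ∀ k x, w (k+1) x = max (w k x) (t (k+1) x) := fun k x => rfl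
    have hwmeas : ∀ k, Measurable (w k) := by
      intro k
      induction k with
      | zero => exact htm 0
      | succ k ih => exact ih.max (htm (k+1))
    have hwlp : ∀ k, MemLpVar p Ω (w k) := by
      intro k
      induction k with
      | zero => exact htlp 0
      | succ k ih => exact memlp_max hΩm hp1 hpm ih (htlp (k+1))
    have hw0 : ∀ k x, 0 ≤ w k x := by
      intro k
      induction k with
      | zero => exact ht0 0
      | succ k ih => exact fun x => le_trans (ih x) (le_max_left _ _)
    have hwbv : ∀ k, bvModular p Ω (w k) ≤ ∑' i, bvModular p Ω (t i) := by
      intro k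
      have hfin : ∀ k, bvModular p Ω (w k) ≤
          ∑ i ∈ Finset.range (k+1), bvModular p Ω (t i) := by
        intro k
        induction k with
        | zero => simp [hwdef, partialMax]
        | succ k ih =>
          refine le_trans (bvmod_max hΩ hp1 hpm (hwlp k) (htlp (k+1))) ?_
          rw [Finset.sum_range_succ]
          exact add_le_add ih le_rfl
      exact (hfin k).trans (ENNReal.sum_le_tsum _)
    have htw : ∀ i x, t i x ≤ w i x := by
      intro i
      induction i with
      | zero => exact fun x => le_rfl
      | succ k ih => exact fun x => le_max_right _ _
    have hwT : ∀ k x, ENNReal.ofReal (w k x) ≤ T x := by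
      intro k
      induction k with
      | zero => exact fun x => le_iSup (fun i => ENNReal.ofReal (t i x)) 0
      | succ k ih =>
        intro x
        rw [hwsucc]
        rcases max_choice (w k x) (t (k+1) x) with h | h
        · rw [h]; exact ih x
        · rw [h]; exact le_iSup (fun i => ENNReal.ofReal (t i x)) (k+1)
    have hwu : ∀ k x, w k x ≤ u x := fun k x => by
      have hmt := ENNReal.toReal_mono (hTne x) (hwT k x)
      rwa [ENNReal.toReal_ofReal (hw0 k x)] at hmt
    have htend : ∀ x, Tendsto (fun k => w k x) atTop (𝓝 (u x)) := by
      intro x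
      have hmono : Monotone fun k => ENNReal.ofReal (w k x) :=
        monotone_nat_of_le_succ fun k => by
          rw [hwsucc]
          exact ENNReal.ofReal_le_ofReal (le_max_left _ _)
      have hsup : (⨆ k, ENNReal.ofReal (w k x)) = T x := by
        refine le_antisymm (iSup_le fun k => hwT k x) ?_
        refine iSup_le fun i => ?_
        exact le_trans (ENNReal.ofReal_le_ofReal (htw i x))
          (le_iSup (fun k => ENNReal.ofReal (w k x)) i)
      have h3 := tendsto_atTop_iSup hmono
      rw [hsup] at h3
      have h4 : Tendsto (fun k => (ENNReal.ofReal (w k x)).toReal) atTop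
          (𝓝 ((T x).toReal)) := (ENNReal.tendsto_toReal (hTne x)).comp h3
      have h5 : (fun k => (ENNReal.ofReal (w k x)).toReal) = fun k => w k x :=
        funext fun k => ENNReal.toReal_ofReal (hw0 k x)
      rw [h5] at h4
      exact h4
    have hdom : ∀ lam : ℝ, 0 < lam →
        Tendsto (fun k => vModular p Ω (fun x => (w k x - u x) / lam)) atTop (𝓝 0) := by
      intro lam hlam
      set M' : ℝ := max M 1 with hM'
      set K : ℝ := max lam⁻¹ (lam⁻¹ ^ M') with hK
      have hKpos : 0 < K := lt_of_lt_of_le (inv_pos.2 hlam) (le_max_left _ _)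
      have e0 : ∀ x : Eu n, ENNReal.ofReal (K * (u x) ^ p x) =
          ENNReal.ofReal K * ENNReal.ofReal ((u x) ^ p x) := fun x =>
        ENNReal.ofReal_mul hKpos.le
      have hbfin : (∫⁻ x in Ω, ENNReal.ofReal (K * (u x) ^ p x)) ≠ ⊤ := by
        rw [lintegral_congr fun x => e0 x,
          lintegral_const_mul' _ _ ENNReal.ofReal_ne_top]
        refine ENNReal.mul_ne_top ENNReal.ofReal_ne_top ?_
        have hveq : (∫⁻ x in Ω, ENNReal.ofReal ((u x) ^ p x)) = vModular p Ω u := by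
          rw [vModular]
          exact lintegral_congr fun x => by rw [abs_of_nonneg (hu0 x)]
        rw [hveq]
        exact (lt_of_le_of_lt hvmu hVfin.lt_top).ne
      have hbd : ∀ k, (fun x => ENNReal.ofReal (|(w k x - u x) / lam| ^ p x))
          ≤ᵐ[volume.restrict Ω] fun x => ENNReal.ofReal (K * (u x) ^ p x) := by
        intro k
        filter_upwards [ae_restrict_mem hΩm] with x hx
        have hq : 1 ≤ p x := hp1 x hx
        have habs : |(w k x - u x) / lam| ≤ lam⁻¹ * u x := by
          rw [abs_div, abs_of_pos hlam, abs_sub_comm,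
            abs_of_nonneg (sub_nonneg.2 (hwu k x)), div_eq_inv_mul]
          exact mul_le_mul_of_nonneg_left (sub_le_self _ (hw0 k x)) (inv_nonneg.2 hlam.le)
        refine ENNReal.ofReal_le_ofReal ?_
        calc |(w k x - u x) / lam| ^ p x ≤ (lam⁻¹ * u x) ^ p x :=
              Real.rpow_le_rpow (abs_nonneg _) habs (zero_le_one.trans hq)
          _ = lam⁻¹ ^ p x * (u x) ^ p x :=
              Real.mul_rpow (inv_nonneg.2 hlam.le) (hu0 x)
          _ ≤ K * (u x) ^ p x := by
              refine mul_le_mul_of_nonneg_right ?_ (Real.rpow_nonneg (hu0 x) _)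
              rcases le_total lam⁻¹ 1 with hc | hc
              · calc lam⁻¹ ^ p x ≤ lam⁻¹ ^ (1:ℝ) :=
                      Real.rpow_le_rpow_of_exponent_ge (inv_pos.2 hlam) hc hq
                  _ = lam⁻¹ := Real.rpow_one _
                  _ ≤ K := le_max_left _ _
              · calc lam⁻¹ ^ p x ≤ lam⁻¹ ^ M' :=
                      Real.rpow_le_rpow_of_exponent_le hc
                        ((hM x hx).trans (le_max_left _ _))
                  _ ≤ K := le_max_right _ _
      have hlim : ∀ᵐ x ∂(volume.restrict Ω),
          Tendsto (fun k => ENNReal.ofReal (|(w k x - u x) / lam| ^ p x)) atTop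
            (𝓝 ((fun _ : Eu n => (0:ℝ≥0∞)) x)) := by
        filter_upwards [ae_restrict_mem hΩm] with x hx
        have hq0 : (0:ℝ) < p x := lt_of_lt_of_le one_pos (hp1 x hx)
        have l1 : Tendsto (fun k => (w k x - u x) / lam) atTop (𝓝 0) := by
          have hh := ((htend x).sub_const (u x)).div_const lam
          simpa using hh
        have c1 : ContinuousAt (fun y : ℝ => |y| ^ p x) 0 :=
          ContinuousAt.rpow_const continuous_abs.continuousAt (Or.inr hq0.le)
        have l2 := c1.tendsto.comp l1
        rw [show |(0:ℝ)| ^ p x = 0 by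
          rw [abs_zero, Real.zero_rpow hq0.ne']] at l2
        have l3 := (ENNReal.continuous_ofReal.tendsto 0).comp l2
        rw [ENNReal.ofReal_zero] at l3
        exact l3
      have hconv := tendsto_lintegral_of_dominated_convergence
        (μ := volume.restrict Ω)
        (F := fun k x => ENNReal.ofReal (|(w k x - u x) / lam| ^ p x))
        (f := fun _ => 0)
        (bound := fun x => ENNReal.ofReal (K * (u x) ^ p x))
        (fun k => ((((hwmeas k).sub hum).div_const _).abs.pow hpm).ennreal_ofReal)
        hbd hbfin hlim
      simpa [vModular] using hconv
    have hzchoice : ∀ k, ∃ z : Eu n → ℝ, LocLipOn Ω z ∧ MemLpVar p Ω z ∧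
        luxNorm p Ω (fun x => z x - w k x) < 1/((k:ℝ)+1) ∧
        gradModular p Ω z ≤ (∑' i, bvModular p Ω (t i)) + (ε:ℝ≥0∞)/2 := by
      intro k
      have hfin : bvModular p Ω (w k) ≠ ⊤ := ne_top_of_le_ne_top hBfin (hwbv k)
      obtain ⟨v, ⟨hvc, hvt⟩, hlim⟩ := bvmod_exists (ENNReal.lt_add_right hfin hε2)
      have hfreq : ∃ᶠ j in atTop,
          gradModular p Ω (v j) < bvModular p Ω (w k) + (ε:ℝ≥0∞)/2 :=
        frequently_lt_of_liminf_lt (by isBoundedDefault) hlim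
      have hev : ∀ᶠ j in atTop,
          luxNorm p Ω (fun x => v j x - w k x) < 1/((k:ℝ)+1) :=
        hvt.eventually (gt_mem_nhds (by positivity))
      obtain ⟨j, hj1, hj2⟩ := (hfreq.and_eventually hev).exists
      exact ⟨v j, (hvc j).1, (hvc j).2, hj2,
        hj1.le.trans (add_le_add_left (hwbv k) _)⟩
    choose z hz1 hz2 hz3 hz4 using hzchoice
    have hmt1 : ModTend p Ω (fun k x => z k x - w k x) := by
      refine modtend_of_lux hΩm hp1
        (fun k => memlp_nonempty hΩm hp1 (memlp_sub hΩm hp1 hpm (hz2 k) (hwlp k))) ?_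
      refine squeeze_zero (fun k => luxNorm_nonneg) (fun k => (hz3 k).le) ?_
      exact tendsto_one_div_add_atTop_nhds_zero_nat
    have hmt2 : ModTend p Ω (fun k x => w k x - u x) := modtend_of_tendsto hdom
    have hzconv : LpTendsto p Ω z u :=
      lux_tendsto_of_sum hΩm hp1 hpm
        (fun k => (hz2 k).1.sub (hwmeas k))
        (fun k x => abs_sub_le _ _ _)
        hmt1 hmt2
    have hbvu : bvModular p Ω u ≤ (∑' i, bvModular p Ω (t i)) + (ε:ℝ≥0∞)/2 := by
      refine le_trans (bvmod_le ⟨fun k => ⟨hz1 k, hz2 k⟩, hzconv⟩) ?_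
      refine le_trans (Filter.liminf_le_liminf (Filter.Eventually.of_forall hz4)) ?_
      rw [Filter.liminf_const]
    have hadm : u ∈ admissibleBV p Ω (⋃ i, E i) := by
      refine ⟨⟨hulpvar, lt_of_le_of_lt hbvu ?_⟩, fun x _ => ⟨hu0 x, hu1 x⟩,
        ⋃ i, UU i, isOpen_iUnion hUopen, iUnion_mono fun i => hEUU i, ?_⟩
      · exact ENNReal.add_lt_top.2 ⟨hBfin.lt_top,
          ENNReal.div_lt_top ENNReal.coe_ne_top (by norm_num)⟩
      · intro x hx
        obtain ⟨hxU, hxΩ⟩ := hx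
        obtain ⟨i, hxi⟩ := mem_iUnion.1 hxU
        have h1 : uu i x = 1 := hUone i x ⟨hxi, hxΩ⟩
        have ht1x : t i x = 1 := by simp [htdef, h1, clampR]
        have hTx : T x = 1 := by
          refine le_antisymm (hT1 x) ?_
          calc (1:ℝ≥0∞) = ENNReal.ofReal (t i x) := by rw [ht1x, ENNReal.ofReal_one]
            _ ≤ T x := le_iSup (fun i => ENNReal.ofReal (t i x)) i
        simp only [hudef, hTx, ENNReal.toReal_one]
    calc bvCapacity p Ω (⋃ i, E i) ≤ vModular p Ω u + bvModular p Ω u :=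
          iInf₂_le u hadm
      _ ≤ (∑' i, vModular p Ω (t i)) +
            ((∑' i, bvModular p Ω (t i)) + (ε:ℝ≥0∞)/2) := add_le_add hvmu hbvu
      _ = ((∑' i, vModular p Ω (t i)) + (∑' i, bvModular p Ω (t i))) + (ε:ℝ≥0∞)/2 := by
          rw [add_assoc]
      _ ≤ ((∑' i, bvCapacity p Ω (E i)) + (ε:ℝ≥0∞)/2) + (ε:ℝ≥0∞)/2 :=
          add_le_add_left hVB _
      _ = (∑' i, bvCapacity p Ω (E i)) + (ε:ℝ≥0∞) := by
          rw [add_assoc, ENNReal.add_halves]
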